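/- arXiv:2504.02350 — 2 statements merged into one kernel-verified Lean document; each statement's English description precedes it below -/
import Mathlib

section
/- Seidel's contraction theorem: Let [β_0/α_0; α_1/β_1, α_2/β_2, …] be a contractable generalized continued fraction with convergents P_k/Q_k, and let (n_k)_{k≥0} be a strictly increasing sequence of non-negative integers. Then the convergent numerators P_k' and denominators Q_k' of the contracted continued fraction with respect to (n_k) satisfy (P_k', Q_k') = c_k (P_{n_k}, Q_{n_k}) for all k ≥ -2, where c_k = ∏_{j=0}^{k-1} Q_{[n_{j-1}+2, n_j]} (with n_j := j for j < 0 and empty product equal to 1). In particular, the contracted continued fraction has convergents P_{n_k}/Q_{n_k}. -/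
open Finset

noncomputable section

open Finset

noncomputable section

/-- The matrix `B_n = [[0, α_n],[1, β_n]]`. -/
def Bmat (α β : ℤ → ℂ) (n : ℤ) : Matrix (Fin 2) (Fin 2) ℂ := !![0, α n; 1, β n]

/-- `Bprod α β m k = B_m B_{m+1} ⋯ B_{m+k}`. -/
def Bprod (α β : ℤ → ℂ) (m : ℤ) : ℕ → Matrix (Fin 2) (Fin 2) ℂ
  | 0 => Bmat α β m
  | k + 1 => Bprod α β m k * Bmat α β (m + k + 1)

/-- `Bseg α β m n = B_{[m,n]} = B_m B_{m+1} ⋯ B_n`, the identity if `n < m`. -/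
def Bseg (α β : ℤ → ℂ) (m n : ℤ) : Matrix (Fin 2) (Fin 2) ℂ :=
  if n < m then 1 else Bprod α β m (n - m).toNat

lemma Bseg_of_lt (α β : ℤ → ℂ) {m n : ℤ} (h : n < m) : Bseg α β m n = 1 := if_pos h

lemma Bseg_self (α β : ℤ → ℂ) (m : ℤ) : Bseg α β m m = Bmat α β m := by
  simp [Bseg, Bprod]

lemma Bseg_succ (α β : ℤ → ℂ) {m n : ℤ} (h : m ≤ n) :
    Bseg α β m n = Bseg α β m (n - 1) * Bmat α β n := by
  rcases eq_or_lt_of_le h with rfl | h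
  · rw [Bseg_self, Bseg_of_lt α β (by omega), one_mul]
  · unfold Bseg
    rw [if_neg (by omega), if_neg (by omega)]
    have hk : (n - m).toNat = (n - 1 - m).toNat + 1 := by omega
    rw [hk]
    show Bprod α β m ((n - 1 - m).toNat) * Bmat α β (m + (n - 1 - m).toNat + 1) = _
    rw [show (m + ((n - 1 - m).toNat : ℤ) + 1) = n by omega]

lemma Bseg_split (α β : ℤ → ℂ) {m t n : ℤ} (h1 : m - 1 ≤ t) (h2 : t ≤ n) :
    Bseg α β m n = Bseg α β m t * Bseg α β (t + 1) n := by
  obtain ⟨d, hd⟩ : ∃ d : ℕ, n = t + d := ⟨(n - t).toNat, by omega⟩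
  subst hd
  clear h2
  induction d with
  | zero =>
    rw [show t + ((0:ℕ):ℤ) = t by simp, Bseg_of_lt α β (show t < t + 1 by omega), mul_one]
  | succ d ih =>
    have e1 : t + ((d:ℕ)+1 : ℕ) = (t + d) + 1 := by push_cast; ring
    rw [e1, Bseg_succ α β (by omega), Bseg_succ α β (show t + 1 ≤ t + d + 1 by omega)]
    rw [show t + (d:ℤ) + 1 - 1 = t + d by ring] at *
    rw [ih, mul_assoc]

lemma Bseg_col0 (α β : ℤ → ℂ) {m n : ℤ} (h : m ≤ n) (i : Fin 2) :
    Bseg α β m n i 0 = Bseg α β m (n - 1) i 1 := by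
  rw [Bseg_succ α β h, Matrix.mul_apply, Fin.sum_univ_two]
  simp [Bmat]

lemma three_term (α β : ℤ → ℂ) {m n : ℤ} (h1 : -1 ≤ m) (h2 : m ≤ n) (i : Fin 2) :
    Bseg α β (-1) n i 1 =
      Bseg α β (m + 1) n 0 1 * Bseg α β (-1) (m - 1) i 1 +
      Bseg α β (m + 1) n 1 1 * Bseg α β (-1) m i 1 := by
  rw [Bseg_split α β (show (-1:ℤ) - 1 ≤ m by omega) h2, Matrix.mul_apply, Fin.sum_univ_two,
    Bseg_col0 α β h1 i]
  ring

/-- Seidel's contraction theorem.  Here `Bseg α β (-1) n 0 1 = P_n` and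
`Bseg α β (-1) n 1 1 = Q_n` are the convergent numerators/denominators of the original gcf
(the digits `α_n, β_n` for `n ≥ 0`, with `α_{-1} = 1, β_{-1} = 0`), and similarly for the
contracted continued fraction with digits `α', β'`.  The sequence `nk` extends the strictly
increasing sequence `(n_k)_{k ≥ 0}` of non-negative integers by `n_k = k` for `k < 0`, and
`c k = ∏_{j=0}^{k-1} Q_{[n_{j-1}+2, n_j]}` (empty product `= 1`).  Conclusion: for all
`k ≥ -2`, `(P'_k, Q'_k) = c_k (P_{n_k}, Q_{n_k})`; in particular the contracted continued
fraction has convergents `P_{n_k}/Q_{n_k}`. -/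
theorem stmt3 (α β : ℤ → ℂ) (hα1 : α (-1) = 1) (hβ1 : β (-1) = 0)
    (hcontr : ∀ m n : ℤ, 0 ≤ m → m ≤ n → Bseg α β (m + 1) n 1 1 ≠ 0)
    (nk : ℤ → ℤ) (hneg : ∀ k : ℤ, k < 0 → nk k = k)
    (hpos : ∀ k : ℤ, 0 ≤ k → 0 ≤ nk k)
    (hmono : ∀ k : ℤ, 0 ≤ k → nk k < nk (k + 1))
    (α' β' : ℤ → ℂ) (hα'1 : α' (-1) = 1) (hβ'1 : β' (-1) = 0)
    (hα' : ∀ k : ℤ, -1 ≤ k → α' (k + 1) =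
      -(Bseg α β (nk (k - 1) + 2) (nk k + 1)).det *
        Bseg α β (nk (k - 2) + 2) (nk (k - 1)) 1 1 *
        Bseg α β (nk k + 2) (nk (k + 1)) 1 1)
    (hβ' : ∀ k : ℤ, -1 ≤ k → β' (k + 1) = Bseg α β (nk (k - 1) + 2) (nk (k + 1)) 1 1)
    (c : ℤ → ℂ)
    (hc : ∀ k : ℤ, c k = ∏ j ∈ Finset.Icc 0 (k - 1), Bseg α β (nk (j - 1) + 2) (nk j) 1 1) :
    ∀ k : ℤ, -2 ≤ k →
      Bseg α' β' (-1) k 0 1 = c k * Bseg α β (-1) (nk k) 0 1 ∧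
      Bseg α' β' (-1) k 1 1 = c k * Bseg α β (-1) (nk k) 1 1 ∧
      Bseg α' β' (-1) k 0 1 / Bseg α' β' (-1) k 1 1 =
        Bseg α β (-1) (nk k) 0 1 / Bseg α β (-1) (nk k) 1 1 := by
  -- monotonicity extended to k ≥ -2
  have hmono' : ∀ k : ℤ, -2 ≤ k → nk k < nk (k + 1) := by
    intro k hk
    rcases le_or_gt 0 k with h | h
    · exact hmono k h
    · rcases le_or_gt 0 (k + 1) with h2 | h2
      · have hk1 : k + 1 = 0 := by omega
        rw [hneg k (by omega), hk1]
        have := hpos 0 le_rfl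
        omega
      · rw [hneg k (by omega), hneg (k + 1) (by omega)]
        omega
  have hlb : ∀ k : ℤ, -2 ≤ k → -2 ≤ nk k := by
    intro k hk
    rcases lt_or_ge k 0 with h | h
    · rw [hneg k h]; exact hk
    · have := hpos k h; omega
  -- c never vanishes
  have hc0 : ∀ k : ℤ, c k ≠ 0 := by
    intro k
    rw [hc k]
    apply Finset.prod_ne_zero_iff.mpr
    intro j hj
    have hj0 : 0 ≤ j := (Finset.mem_Icc.mp hj).1
    have hm : 0 ≤ nk (j - 1) + 1 := by
      rcases lt_or_ge (j - 1) 0 with h | h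
      · have := hneg (j - 1) h; omega
      · have := hpos (j - 1) h; omega
    have hmn : nk (j - 1) + 1 ≤ nk j := by
      rcases lt_or_ge (j - 1) 0 with h | h
      · have h1 := hneg (j - 1) h
        have h2 := hpos j hj0
        omega
      · have := hmono (j - 1) h
        rw [show j - 1 + 1 = j by ring] at this
        omega
    have h := hcontr (nk (j - 1) + 1) (nk j) hm hmn
    rw [show nk (j - 1) + 1 + 1 = nk (j - 1) + 2 by ring] at h
    exact h
  -- the recursion for c
  have cstep : ∀ k : ℤ, -2 ≤ k → c (k + 1) = c k * Bseg α β (nk (k - 1) + 2) (nk k) 1 1 := by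
    intro k hk
    rcases lt_or_ge k 0 with h | h
    · rw [hc, hc, hneg (k - 1) (by omega), hneg k h, show k + 1 - 1 = k by ring,
        Finset.Icc_eq_empty (by omega : ¬ (0:ℤ) ≤ k),
        Finset.Icc_eq_empty (by omega : ¬ (0:ℤ) ≤ k - 1), Finset.prod_empty,
        Bseg_of_lt α β (show k < k - 1 + 2 by omega), Matrix.one_apply_eq, mul_one]
    · rw [hc, hc, show k + 1 - 1 = k by ring]
      have e : Finset.Icc (0:ℤ) k = insert k (Finset.Icc 0 (k - 1)) := by
        ext x
        simp only [Finset.mem_Icc, Finset.mem_insert]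
        omega
      rw [e, Finset.prod_insert (by simp only [Finset.mem_Icc]; omega)]
      exact mul_comm _ _
  -- base cases
  have base2 : ∀ i : Fin 2, Bseg α' β' (-1) (-2) i 1 = c (-2) * Bseg α β (-1) (nk (-2)) i 1 := by
    intro i
    rw [hneg (-2) (by omega), Bseg_of_lt α' β' (by omega), Bseg_of_lt α β (by omega), hc,
      show (-2:ℤ) - 1 = -3 by ring, Finset.Icc_eq_empty (by omega), Finset.prod_empty, one_mul]
  have base1 : ∀ i : Fin 2, Bseg α' β' (-1) (-1) i 1 = c (-1) * Bseg α β (-1) (nk (-1)) i 1 := by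
    intro i
    rw [hneg (-1) (by omega), Bseg_self, Bseg_self, hc, show (-1:ℤ) - 1 = -2 by ring,
      Finset.Icc_eq_empty (by omega), Finset.prod_empty, one_mul]
    fin_cases i <;> simp [Bmat, hα1, hβ1, hα'1, hβ'1]
  -- induction step
  have key : ∀ k : ℤ, -1 ≤ k →
      (∀ i : Fin 2, Bseg α' β' (-1) (k - 1) i 1 = c (k - 1) * Bseg α β (-1) (nk (k - 1)) i 1) →
      (∀ i : Fin 2, Bseg α' β' (-1) k i 1 = c k * Bseg α β (-1) (nk k) i 1) →
      ∀ i : Fin 2,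
        Bseg α' β' (-1) (k + 1) i 1 = c (k + 1) * Bseg α β (-1) (nk (k + 1)) i 1 := by
    intro k hk ih1 ih2 i
    have lb1 : -2 ≤ nk (k - 1) := hlb (k - 1) (by omega)
    have lb2 : -2 ≤ nk k := hlb k (by omega)
    have A1 : nk (k - 1) < nk k := by
      have := hmono' (k - 1) (by omega)
      rwa [show k - 1 + 1 = k by ring] at this
    have A2 : nk k < nk (k + 1) := hmono' k (by omega)
    have E0 := three_term α β (show (-1:ℤ) ≤ nk (k - 1) + 1 by omega)
      (show nk (k - 1) + 1 ≤ nk k by omega) i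
    rw [show nk (k - 1) + 1 + 1 = nk (k - 1) + 2 by ring,
      show nk (k - 1) + 1 - 1 = nk (k - 1) by ring] at E0
    have E1 := three_term α β (show (-1:ℤ) ≤ nk (k - 1) + 1 by omega)
      (show nk (k - 1) + 1 ≤ nk k + 1 by omega) i
    rw [show nk (k - 1) + 1 + 1 = nk (k - 1) + 2 by ring,
      show nk (k - 1) + 1 - 1 = nk (k - 1) by ring] at E1
    have E2 := three_term α β (show (-1:ℤ) ≤ nk k + 1 by omega)
      (show nk k + 1 ≤ nk (k + 1) by omega) i
    rw [show nk k + 1 + 1 = nk k + 2 by ring, show nk k + 1 - 1 = nk k by ring] at E2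
    have Hdet : (Bseg α β (nk (k - 1) + 2) (nk k + 1)).det =
        Bseg α β (nk (k - 1) + 2) (nk k) 0 1 * Bseg α β (nk (k - 1) + 2) (nk k + 1) 1 1 -
        Bseg α β (nk (k - 1) + 2) (nk k + 1) 0 1 * Bseg α β (nk (k - 1) + 2) (nk k) 1 1 := by
      rw [Matrix.det_fin_two,
        Bseg_col0 α β (show nk (k - 1) + 2 ≤ nk k + 1 by omega) 0,
        Bseg_col0 α β (show nk (k - 1) + 2 ≤ nk k + 1 by omega) 1,
        show nk k + 1 - 1 = nk k by ring]
    have Hbsplit : Bseg α β (nk (k - 1) + 2) (nk (k + 1)) 1 1 =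
        Bseg α β (nk (k - 1) + 2) (nk k) 1 1 * Bseg α β (nk k + 2) (nk (k + 1)) 0 1 +
        Bseg α β (nk (k - 1) + 2) (nk k + 1) 1 1 * Bseg α β (nk k + 2) (nk (k + 1)) 1 1 := by
      rw [Bseg_split α β (show nk (k - 1) + 2 - 1 ≤ nk k + 1 by omega)
          (show nk k + 1 ≤ nk (k + 1) by omega), Matrix.mul_apply, Fin.sum_univ_two,
        Bseg_col0 α β (show nk (k - 1) + 2 ≤ nk k + 1 by omega) 1,
        show nk k + 1 - 1 = nk k by ring, show nk k + 1 + 1 = nk k + 2 by ring]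
    have hck := cstep (k - 1) (by omega)
    rw [show k - 1 + 1 = k by ring, show k - 1 - 1 = k - 2 by ring] at hck
    have L : Bseg α' β' (-1) (k + 1) i 1 =
        Bseg α' β' (-1) (k - 1) i 1 * α' (k + 1) + Bseg α' β' (-1) k i 1 * β' (k + 1) := by
      rw [Bseg_succ α' β' (show (-1:ℤ) ≤ k + 1 by omega), show k + 1 - 1 = k by ring,
        Matrix.mul_apply, Fin.sum_univ_two, Bseg_col0 α' β' (show (-1:ℤ) ≤ k by omega) i]
      simp [Bmat]
    rw [L, ih1 i, ih2 i, hα' k (by omega), hβ' k (by omega), Hbsplit, cstep k (by omega), hck,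
      Hdet, E2, E1, E0]
    ring
  -- assemble by induction on a natural number parameter
  have main : ∀ d : ℕ,
      (∀ i : Fin 2, Bseg α' β' (-1) (-2 + d) i 1 = c (-2 + d) * Bseg α β (-1) (nk (-2 + d)) i 1) ∧
      (∀ i : Fin 2, Bseg α' β' (-1) (-1 + d) i 1 = c (-1 + d) * Bseg α β (-1) (nk (-1 + d)) i 1) := by
    intro d
    induction d with
    | zero =>
      constructor
      · rw [show (-2 + ((0:ℕ):ℤ)) = -2 by simp]; exact base2
      · rw [show (-1 + ((0:ℕ):ℤ)) = -1 by simp]; exact base1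
    | succ d ih =>
      have e1 : (-2 : ℤ) + ((d + 1 : ℕ) : ℤ) = -1 + d := by push_cast; ring
      have e2 : (-1 : ℤ) + ((d + 1 : ℕ) : ℤ) = (-1 + d) + 1 := by push_cast; ring
      constructor
      · rw [e1]; exact ih.2
      · rw [e2]
        exact key (-1 + d) (by omega)
          (by rw [show (-1 + (d:ℤ)) - 1 = -2 + d by ring]; exact ih.1) ih.2
  intro k hk
  obtain ⟨d, hd⟩ : ∃ d : ℕ, k = -2 + d := ⟨(k + 2).toNat, by omega⟩
  have hS : ∀ i : Fin 2, Bseg α' β' (-1) k i 1 = c k * Bseg α β (-1) (nk k) i 1 := by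
    rw [hd]; exact (main d).1
  refine ⟨hS 0, hS 1, ?_⟩
  rw [hS 0, hS 1, mul_div_mul_left _ _ (hc0 k)]


end
end
end

section
/- The measure μ on [0,1] with density 1/x with respect to Lebesgue measure is invariant under the Farey tent map F, i.e., μ(F^{-1}(E)) = μ(E) for every Borel set E ⊆ [0,1]. -/
open MeasureTheory

noncomputable section

/-- The Farey tent map. -/
def F (x : ℝ) : ℝ := if x ≤ 1 / 2 then x / (1 - x) else (1 - x) / x

/-- The infinite, σ-finite measure on `[0,1]` with density `1/x` with respect to Lebesgue
measure. -/
def fareyMeasure : Measure ℝ :=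
  (volume.restrict (Set.Icc (0 : ℝ) 1)).withDensity fun x => ENNReal.ofReal (1 / x)

/-- 1-D change of variables for lintegrals. -/
theorem lintegral_image_eq_lintegral_abs_deriv_mul' {s : Set ℝ} {f : ℝ → ℝ} {f' : ℝ → ℝ}
    (hs : MeasurableSet s) (hf' : ∀ x ∈ s, HasDerivWithinAt f (f' x) s x)
    (hf : Set.InjOn f s) (g : ℝ → ENNReal) :
    ∫⁻ x in f '' s, g x = ∫⁻ x in s, ENNReal.ofReal |f' x| * g (f x) := by
  simpa only [ContinuousLinearMap.det_toSpanSingleton] using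
    lintegral_image_eq_lintegral_abs_det_fderiv_mul volume hs
      (fun x hx => (hf' x hx).hasFDerivWithinAt) hf g

/-- The measure with density `1/x` on `[0,1]` is invariant under the Farey tent map:
`μ (F⁻¹ E) = μ E` for every Borel set `E ⊆ [0,1]`. -/
theorem stmt8 (E : Set ℝ) (hE : MeasurableSet E) (hE1 : E ⊆ Set.Icc 0 1) :
    fareyMeasure (F ⁻¹' E) = fareyMeasure E := by
  classical
  -- left and right inverse branches
  set g : ℝ → ℝ := fun y => y / (1 + y) with hg_def
  set h : ℝ → ℝ := fun y => 1 / (1 + y) with hh_def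
  have hFmeas : Measurable F := by
    unfold F
    exact Measurable.ite (measurableSet_Iic (a := (1:ℝ)/2))
      (measurable_id.div (measurable_const.sub measurable_id))
      ((measurable_const.sub measurable_id).div measurable_id)
  have hE' : MeasurableSet (E \ {1}) := hE.diff (measurableSet_singleton 1)
  -- positivity facts
  have hpos : ∀ y ∈ E, (0:ℝ) < 1 + y := fun y hy => by
    have := (hE1 hy).1; linarith
  -- the set identity
  have key : F ⁻¹' E ∩ Set.Icc 0 1 = g '' E ∪ h '' (E \ {1}) := by
    ext x
    constructor
    · rintro ⟨hxE, hx0, hx1⟩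
      by_cases hhalf : x ≤ 1 / 2
      · left
        refine ⟨x / (1 - x), ?_, ?_⟩
        · simpa only [Set.mem_preimage, F, if_pos hhalf] using hxE
        · have h1x : (0:ℝ) < 1 - x := by linarith
          simp only [hg_def]
          field_simp
          ring
      · right
        push_neg at hhalf
        have hx0' : (0:ℝ) < x := by linarith
        refine ⟨(1 - x) / x, ⟨?_, ?_⟩, ?_⟩
        · simpa only [Set.mem_preimage, F, if_neg (not_le.mpr hhalf)] using hxE
        · simp only [Set.mem_singleton_iff]
          intro hc
          rw [div_eq_one_iff_eq (ne_of_gt hx0')] at hc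
          linarith
        · simp only [hh_def]
          field_simp
          ring
    · rintro (⟨y, hy, rfl⟩ | ⟨y, ⟨hy, hy1⟩, rfl⟩)
      · have hy0 := (hE1 hy).1
        have hy1 := (hE1 hy).2
        have h1y : (0:ℝ) < 1 + y := by linarith
        have hgle : g y ≤ 1 / 2 := by
          rw [hg_def]; rw [div_le_div_iff₀ h1y (by norm_num)]; linarith
        have hg0 : 0 ≤ g y := div_nonneg hy0 (le_of_lt h1y)
        have hFg : F (g y) = y := by
          simp only [F, hgle, if_pos]
          rw [hg_def]
          have : 1 - y / (1 + y) = 1 / (1 + y) := by field_simp; ring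
          rw [this]
          field_simp
        refine ⟨by simpa [hFg] using hy, hg0, le_trans hgle (by norm_num)⟩
      · have hy0 := (hE1 hy).1
        have hy1' : y < 1 := lt_of_le_of_ne (hE1 hy).2 (by simpa using hy1)
        have h1y : (0:ℝ) < 1 + y := by linarith
        have hhgt : 1 / 2 < h y := by
          rw [hh_def]; rw [div_lt_div_iff₀ (by norm_num) h1y]; linarith
        have hhle : h y ≤ 1 := by
          rw [hh_def, div_le_one h1y]; linarith
        have hFh : F (h y) = y := by
          simp only [F, not_le.mpr hhgt, if_neg, not_le]
          rw [hh_def]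
          have hne : (1:ℝ)/(1+y) ≠ 0 := by positivity
          field_simp
          simp
        exact ⟨by simpa [hFh] using hy, le_trans (by norm_num) (le_of_lt hhgt), hhle⟩
  -- derivatives
  have hgderiv : ∀ y ∈ E, HasDerivWithinAt g (1 / (1 + y)^2) E y := by
    intro y hy
    have h1y := hpos y hy
    have A : HasDerivAt (fun x : ℝ => x) 1 y := hasDerivAt_id y
    have B : HasDerivAt (fun x : ℝ => 1 + x) 1 y := by simpa using A.const_add (1:ℝ)
    have C : HasDerivAt (fun x : ℝ => x / (1 + x)) ((1 * (1 + y) - y * 1) / (1 + y)^2) y :=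
      A.div B (ne_of_gt h1y)
    have h2 : (1 * (1 + y) - y * 1) = 1 := by ring
    rw [h2] at C
    exact C.hasDerivWithinAt
  have hhderiv : ∀ y ∈ E \ {1}, HasDerivWithinAt h (-(1 / (1 + y)^2)) (E \ {1}) y := by
    intro y hy
    have h1y := hpos y hy.1
    have B : HasDerivAt (fun x : ℝ => 1 + x) 1 y := by
      simpa using (hasDerivAt_id y).const_add (1:ℝ)
    have C : HasDerivAt (fun x : ℝ => (1 + x)⁻¹) (-1 / (1 + y)^2) y :=
      B.inv (ne_of_gt h1y)
    have C' : HasDerivAt h (-1 / (1 + y)^2) y := by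
      simpa [hh_def, one_div] using C
    have h2 : (-1 / (1 + y)^2 : ℝ) = -(1 / (1 + y)^2) := by ring
    rw [h2] at C'
    exact C'.hasDerivWithinAt
  -- injectivity
  have hginj : Set.InjOn g E := by
    intro a ha b hb hab
    have h1a := hpos a ha
    have h1b := hpos b hb
    rw [hg_def] at hab
    field_simp at hab
    nlinarith [hab]
  have hhinj : Set.InjOn h (E \ {1}) := by
    intro a ha b hb hab
    have h1a := hpos a ha.1
    have h1b := hpos b hb.1
    rw [hh_def] at hab
    field_simp at hab
    linarith
  -- continuity for image measurability
  have hgcont : ContinuousOn g E := by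
    intro y hy
    exact (continuousAt_id.div (continuousAt_const.add continuousAt_id)
      (ne_of_gt (hpos y hy))).continuousWithinAt
  have hhcont : ContinuousOn h (E \ {1}) := by
    intro y hy
    exact (continuousAt_const.div (continuousAt_const.add continuousAt_id)
      (ne_of_gt (hpos y hy.1))).continuousWithinAt
  have hgimg : MeasurableSet (g '' E) := hE.image_of_continuousOn_injOn hgcont hginj
  have hhimg : MeasurableSet (h '' (E \ {1})) :=
    hE'.image_of_continuousOn_injOn hhcont hhinj
  -- disjointness
  have hdisj : Disjoint (g '' E) (h '' (E \ {1})) := by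
    rw [Set.disjoint_left]
    rintro x ⟨y, hy, rfl⟩ ⟨z, hz, hzx⟩
    have hy0 := (hE1 hy).1
    have hy1 := (hE1 hy).2
    have h1y : (0:ℝ) < 1 + y := by linarith
    have hgle : g y ≤ 1 / 2 := by
      rw [hg_def]; rw [div_le_div_iff₀ h1y (by norm_num)]; linarith
    have hz1 : z < 1 := lt_of_le_of_ne (hE1 hz.1).2 (by simpa using hz.2)
    have h1z : (0:ℝ) < 1 + z := by have := (hE1 hz.1).1; linarith
    have hhgt : 1 / 2 < h z := by
      rw [hh_def]; rw [div_lt_div_iff₀ (by norm_num) h1z]; linarith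
    rw [hzx] at hhgt
    linarith
  -- main computation
  have hpre : MeasurableSet (F ⁻¹' E) := hFmeas hE
  rw [fareyMeasure, withDensity_apply _ hpre, withDensity_apply _ hE,
    Measure.restrict_restrict hpre, Measure.restrict_restrict hE,
    Set.inter_eq_self_of_subset_left hE1, key,
    lintegral_union hhimg hdisj,
    lintegral_image_eq_lintegral_abs_deriv_mul' hE hgderiv hginj,
    lintegral_image_eq_lintegral_abs_deriv_mul' hE' hhderiv hhinj]
  -- replace E \ {1} by E in the second integral
  have hEone : (E \ {1} : Set ℝ) =ᵐ[volume] E := by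
    refine diff_ae_eq_self.mpr ?_
    exact measure_mono_null Set.inter_subset_right (Real.volume_singleton)
  rw [setLIntegral_congr hEone]
  -- combine the two integrals
  rw [← lintegral_add_left]
  · -- now prove a.e. equality of integrands on E
    have hE0 : (E \ {0} : Set ℝ) =ᵐ[volume] E := by
      refine diff_ae_eq_self.mpr ?_
      exact measure_mono_null Set.inter_subset_right (Real.volume_singleton)
    rw [← setLIntegral_congr hE0, ← setLIntegral_congr hE0 (f := fun y => ENNReal.ofReal (1/y))]
    refine setLIntegral_congr_fun (hE.diff (measurableSet_singleton 0)) ?_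
    intro y hy
    beta_reduce
    have hy0 : (0:ℝ) < y := lt_of_le_of_ne (hE1 hy.1).1 (by simpa using (Ne.symm hy.2))
    have h1y : (0:ℝ) < 1 + y := by linarith
    have hgy : g y = y / (1 + y) := rfl
    have hhy : h y = 1 / (1 + y) := rfl
    rw [hgy, hhy]
    have e1 : |1 / (1 + y)^2| = 1 / (1 + y)^2 := abs_of_pos (by positivity)
    have e2 : |(-(1 / (1 + y)^2))| = 1 / (1 + y)^2 := by rw [abs_neg]; exact e1
    rw [e1, e2]
    rw [← ENNReal.ofReal_mul (by positivity), ← ENNReal.ofReal_mul (by positivity),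
      ← ENNReal.ofReal_add (by positivity) (by positivity)]
    congr 1
    field_simp
  · exact (Measurable.ennreal_ofReal (by fun_prop)).mul (Measurable.ennreal_ofReal (by fun_prop))
end
end
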